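/- The sandwiched quadratic form satisfies μᵀ R̄ Q̄² R̄ μ = ( (1+δ_R)(1+δ_Q) ‖μ‖ / ((1+γ(1+δ_Q)) λ_R) )² · ( 1 + β² ‖μ‖² ‖μ_β‖² / λ_Q² − 2 β² ‖μ‖² / λ_Q ). -/

import Mathlib

open Matrix

/-- Deterministic equivalent resolvent `((v vᵀ + I_p)/(1+δ) + γ I_p)⁻¹`. -/
noncomputable def detEquivResolvent (p : ℕ) (v : Fin p → ℝ) (δ γ : ℝ) :
    Matrix (Fin p) (Fin p) ℝ :=
  ((1 + δ)⁻¹ • (vecMulVec v v + 1) + γ • (1 : Matrix (Fin p) (Fin p) ℝ))⁻¹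

lemma vmv_mul_vmv {p : ℕ} (v : Fin p → ℝ) :
    vecMulVec v v * vecMulVec v v = (v ⬝ᵥ v) • vecMulVec v v := by
  ext i j
  simp [mul_apply, vecMulVec_apply, dotProduct, Finset.sum_mul, Finset.mul_sum]
  ring_nf
  congr 1; ext k; ring

lemma vmv_mulVec {p : ℕ} (v w x : Fin p → ℝ) :
    (vecMulVec v w).mulVec x = (w ⬝ᵥ x) • v := by
  ext i
  simp only [mulVec, dotProduct, vecMulVec_apply, Pi.smul_apply, smul_eq_mul,
    Finset.sum_mul]
  exact Finset.sum_congr rfl fun j _ => by ring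

lemma dot_self_nonneg {p : ℕ} (v : Fin p → ℝ) : 0 ≤ v ⬝ᵥ v :=
  Finset.sum_nonneg fun i _ => mul_self_nonneg _

lemma scalar_c1 (δ γ : ℝ) (h1 : 0 < 1 + δ) (h2 : 0 < 1 + γ * (1 + δ)) :
    ((1 + δ)⁻¹ + γ) * ((1 + δ) / (1 + γ * (1 + δ))) = 1 := by
  field_simp
  exact div_self (ne_of_gt (by nlinarith))

lemma scalar_c2 (s δ γ : ℝ) (h1 : 0 < 1 + δ) (h2 : 0 < 1 + γ * (1 + δ))
    (h3 : 0 < s + 1 + γ * (1 + δ)) :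
    (1 + δ)⁻¹ * ((1 + δ) / (1 + γ * (1 + δ))) +
      (1 + δ)⁻¹ * (-(1 + δ) / ((1 + γ * (1 + δ)) * (s + 1 + γ * (1 + δ)))) * s +
      ((1 + δ)⁻¹ + γ) * (-(1 + δ) / ((1 + γ * (1 + δ)) * (s + 1 + γ * (1 + δ)))) = 0 := by
  have h2' : 1 + (1 + δ) * γ ≠ 0 := by nlinarith
  have h3' : s + 1 + (1 + δ) * γ ≠ 0 := by nlinarith
  field_simp
  ring

lemma resolvent_eq {p : ℕ} (v : Fin p → ℝ) (δ γ : ℝ) (hδ : -1 < δ) (hγ : 0 < γ) :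
    detEquivResolvent p v δ γ =
      ((1 + δ) / (1 + γ * (1 + δ))) • (1 : Matrix (Fin p) (Fin p) ℝ) +
      (-(1 + δ) / ((1 + γ * (1 + δ)) * (v ⬝ᵥ v + 1 + γ * (1 + δ)))) • vecMulVec v v := by
  have h1 : (0:ℝ) < 1 + δ := by linarith
  have h2 : (0:ℝ) < 1 + γ * (1 + δ) := by positivity
  have h3 : (0:ℝ) < v ⬝ᵥ v + 1 + γ * (1 + δ) := by
    have := dot_self_nonneg v; nlinarith
  apply inv_eq_right_inv
  have expand : ((1 + δ)⁻¹ • (vecMulVec v v + 1) + γ • (1 : Matrix (Fin p) (Fin p) ℝ)) *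
      (((1 + δ) / (1 + γ * (1 + δ))) • (1 : Matrix (Fin p) (Fin p) ℝ) +
        (-(1 + δ) / ((1 + γ * (1 + δ)) * (v ⬝ᵥ v + 1 + γ * (1 + δ)))) • vecMulVec v v)
      = (((1 + δ)⁻¹ + γ) * ((1 + δ) / (1 + γ * (1 + δ)))) • (1 : Matrix (Fin p) (Fin p) ℝ)
        + ((1 + δ)⁻¹ * ((1 + δ) / (1 + γ * (1 + δ))) +
            (1 + δ)⁻¹ * (-(1 + δ) / ((1 + γ * (1 + δ)) * (v ⬝ᵥ v + 1 + γ * (1 + δ)))) * (v ⬝ᵥ v) +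
            ((1 + δ)⁻¹ + γ) * (-(1 + δ) / ((1 + γ * (1 + δ)) * (v ⬝ᵥ v + 1 + γ * (1 + δ))))) •
            vecMulVec v v := by
    simp only [add_mul, mul_add, smul_mul_assoc, mul_smul_comm, mul_one, one_mul,
      smul_add, smul_smul, vmv_mul_vmv]
    module
  rw [expand, scalar_c1 δ γ h1 h2, scalar_c2 (v ⬝ᵥ v) δ γ h1 h2 h3]
  simp

lemma hC_gen (a b L m s β : ℝ) (hb : b ≠ 0) (hL : L ≠ 0) :
    (a / b) ^ 2 * s + β ^ 2 * s ^ 2 *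
        (2 * (a / b) * (-a / (b * L)) + (-a / (b * L)) ^ 2 * m) =
      (a / b) ^ 2 * s * (1 + β ^ 2 * s * m / L ^ 2 - 2 * β ^ 2 * s / L) := by
  field_simp
  ring

set_option maxHeartbeats 2000000 in
/-- with `μ_β = β μ + μ⊥` (`⟨μ, μ⊥⟩ = 0`),
`Q̄ = ((μ_β μ_βᵀ + I)/(1+δ_Q) + γ I)⁻¹`, `R̄ = ((μ μᵀ + I)/(1+δ_R) + γ̃ I)⁻¹`,
`λ_Q = ‖μ_β‖² + 1 + γ(1+δ_Q)`, `λ_R = ‖μ‖² + 1 + γ̃(1+δ_R)`, the sandwiched quadratic form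
satisfies `μᵀ R̄ Q̄² R̄ μ = ((1+δ_R)(1+δ_Q)‖μ‖/((1+γ(1+δ_Q)) λ_R))² ·
(1 + β² ‖μ‖² ‖μ_β‖²/λ_Q² − 2 β² ‖μ‖²/λ_Q)`. -/
theorem sandwiched_quadratic_form
    (p : ℕ) (hp : 1 ≤ p) (μ μperp : Fin p → ℝ) (horth : μ ⬝ᵥ μperp = 0)
    (β : ℝ) (δQ δR γ γt : ℝ) (hδQ : -1 < δQ) (hδR : -1 < δR) (hγ : 0 < γ) (hγt : 0 < γt) :
    μ ⬝ᵥ (detEquivResolvent p μ δR γt *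
        detEquivResolvent p (β • μ + μperp) δQ γ *
        detEquivResolvent p (β • μ + μperp) δQ γ *
        detEquivResolvent p μ δR γt).mulVec μ =
      ((1 + δR) * (1 + δQ) * Real.sqrt (μ ⬝ᵥ μ) /
          ((1 + γ * (1 + δQ)) * (μ ⬝ᵥ μ + 1 + γt * (1 + δR)))) ^ 2 *
        (1 +
          β ^ 2 * (μ ⬝ᵥ μ) * ((β • μ + μperp) ⬝ᵥ (β • μ + μperp)) /
            ((β • μ + μperp) ⬝ᵥ (β • μ + μperp) + 1 + γ * (1 + δQ)) ^ 2 -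
          2 * β ^ 2 * (μ ⬝ᵥ μ) /
            ((β • μ + μperp) ⬝ᵥ (β • μ + μperp) + 1 + γ * (1 + δQ))) := by
  
  have horth' : μperp ⬝ᵥ μ = 0 := by rwa [dotProduct_comm]
  have hsq : Real.sqrt (μ ⬝ᵥ μ) ^ 2 = μ ⬝ᵥ μ := Real.sq_sqrt (dot_self_nonneg μ)
  rw [resolvent_eq μ δR γt hδR hγt, resolvent_eq (β • μ + μperp) δQ γ hδQ hγ]
  simp only [← Matrix.mulVec_mulVec, add_mulVec, smul_mulVec, one_mulVec,
    vmv_mulVec, mulVec_add, mulVec_smul, smul_add, smul_smul, dotProduct_add,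
    dotProduct_smul, add_dotProduct, smul_dotProduct, smul_eq_mul, horth, horth',
    mul_zero, zero_mul, add_zero, zero_add]
  set s := μ ⬝ᵥ μ
  set t := μperp ⬝ᵥ μperp
  have hs : 0 ≤ s := dot_self_nonneg μ
  have ht : 0 ≤ t := dot_self_nonneg μperp
  have h1Q : (0:ℝ) < 1 + δQ := by linarith
  have h1R : (0:ℝ) < 1 + δR := by linarith
  have h2Q : (0:ℝ) < 1 + γ * (1 + δQ) := by positivity
  have h2R : (0:ℝ) < 1 + γt * (1 + δR) := by positivity
  have hlQ : (0:ℝ) < β * (β * s) + t + 1 + γ * (1 + δQ) := by nlinarith [sq_nonneg β, mul_nonneg (mul_self_nonneg β) hs]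
  have hlR : (0:ℝ) < s + 1 + γt * (1 + δR) := by nlinarith
  generalize hhR : (1 + δR) / (1 + γt * (1 + δR)) = eR
  generalize hfR : -(1 + δR) / ((1 + γt * (1 + δR)) * (s + 1 + γt * (1 + δR))) = fR
  generalize hhQ : (1 + δQ) / (1 + γ * (1 + δQ)) = eQ
  generalize hfQ : -(1 + δQ) / ((1 + γ * (1 + δQ)) * (β * (β * s) + t + 1 + γ * (1 + δQ))) = fQ
  trans ((eR + fR * s) ^ 2 * (eQ ^ 2 * s + β ^ 2 * s ^ 2 * (2 * eQ * fQ + fQ ^ 2 * (β * (β * s) + t))))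
  · ring
  · have hA : (1 + δR) / (1 + γt * (1 + δR)) +
        -(1 + δR) / ((1 + γt * (1 + δR)) * (s + 1 + γt * (1 + δR))) * s =
        (1 + δR) / (s + 1 + γt * (1 + δR)) := by
      field_simp
      ring
    have hC : ((1 + δQ) / (1 + γ * (1 + δQ))) ^ 2 * s +
        β ^ 2 * s ^ 2 *
          (2 * ((1 + δQ) / (1 + γ * (1 + δQ))) *
              (-(1 + δQ) / ((1 + γ * (1 + δQ)) * (β * (β * s) + t + 1 + γ * (1 + δQ)))) +
            (-(1 + δQ) / ((1 + γ * (1 + δQ)) * (β * (β * s) + t + 1 + γ * (1 + δQ)))) ^ 2 *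
              (β * (β * s) + t)) =
        ((1 + δQ) / (1 + γ * (1 + δQ))) ^ 2 * s *
          (1 + β ^ 2 * s * (β * (β * s) + t) / (β * (β * s) + t + 1 + γ * (1 + δQ)) ^ 2 -
            2 * β ^ 2 * s / (β * (β * s) + t + 1 + γ * (1 + δQ))) :=
      hC_gen (1 + δQ) (1 + γ * (1 + δQ)) (β * (β * s) + t + 1 + γ * (1 + δQ))
        (β * (β * s) + t) s β h2Q.ne' hlQ.ne'
    have hE : ((1 + δR) / (s + 1 + γt * (1 + δR))) ^ 2 * ((1 + δQ) / (1 + γ * (1 + δQ))) ^ 2 * s =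
        ((1 + δR) * (1 + δQ) * Real.sqrt s / ((1 + γ * (1 + δQ)) * (s + 1 + γt * (1 + δR)))) ^ 2 := by
      conv_rhs => rw [div_pow, mul_pow, mul_pow, hsq]
      field_simp
    rw [← hhR, ← hfR, ← hhQ, ← hfQ, hA, hC, ← hE]
    ring
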